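/- arXiv:1612.00130 — 5 statements merged into one kernel-verified Lean document; each statement's English description precedes it below -/
import Mathlib

section
/- For a pair of finite random variables (X,Y) with X binary, the conditional entropy satisfies H(X|Y) ≥ Z(X|Y)², where Z is the Bhattacharyya parameter and entropy is measured in bits. -/
open Real Set

noncomputable def Faux (u : ℝ) : ℝ := (1+u) * Real.log (1+u) + (1-u) * Real.log (1-u)

lemma hasDerivAt_log1p {u : ℝ} (h : -1 < u) :
    HasDerivAt (fun u : ℝ => Real.log (1+u)) (1/(1+u)) u := by
  have : HasDerivAt (fun u : ℝ => 1 + u) 1 u := (hasDerivAt_id u).const_add 1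
  exact this.log (by linarith)

lemma hasDerivAt_log1m {u : ℝ} (h : u < 1) :
    HasDerivAt (fun u : ℝ => Real.log (1-u)) (-1/(1-u)) u := by
  have : HasDerivAt (fun u : ℝ => 1 - u) (-1) u := (hasDerivAt_id u).const_sub 1
  exact this.log (by linarith)

lemma hasDerivAt_phi {u : ℝ} (h1 : -1 < u) (h2 : u < 1) :
    HasDerivAt (fun u : ℝ => 2*u/(1-u^2) - (Real.log (1+u) - Real.log (1-u)))
      (4*u^2/(1-u^2)^2) u := by
  have e1 : (0:ℝ) < 1 + u := by linarith
  have e2 : (0:ℝ) < 1 - u := by linarith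
  have e3 : (1:ℝ) - u^2 ≠ 0 := by nlinarith
  have dnum : HasDerivAt (fun u : ℝ => 2*u) 2 u := by
    simpa using (hasDerivAt_id u).const_mul (2:ℝ)
  have dden : HasDerivAt (fun u : ℝ => 1 - u^2) (-(2*u)) u := by
    have := (hasDerivAt_pow 2 u).const_sub 1
    simpa using this
  have d1 := dnum.div dden e3
  have d := d1.sub ((hasDerivAt_log1p h1).sub (hasDerivAt_log1m h2))
  refine d.congr_deriv ?_
  field_simp
  ring

lemma hasDerivAt_Faux {u : ℝ} (h1 : -1 < u) (h2 : u < 1) :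
    HasDerivAt Faux (Real.log (1+u) - Real.log (1-u)) u := by
  have e1 : (0:ℝ) < 1 + u := by linarith
  have e2 : (0:ℝ) < 1 - u := by linarith
  have c1 : HasDerivAt (fun u : ℝ => 1 + u) 1 u := (hasDerivAt_id u).const_add 1
  have c2 : HasDerivAt (fun u : ℝ => 1 - u) (-1) u := (hasDerivAt_id u).const_sub 1
  have t1 := c1.mul (hasDerivAt_log1p h1)
  have t2 := c2.mul (hasDerivAt_log1m h2)
  have d := t1.add t2
  unfold Faux
  refine d.congr_deriv ?_
  field_simp
  ring

lemma hasDerivAt_D {u : ℝ} (h1 : -1 < u) (h2 : u < 1) :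
    HasDerivAt (fun u : ℝ => u * (Real.log (1+u) - Real.log (1-u)) - 2 * Faux u)
      (2*u/(1-u^2) - (Real.log (1+u) - Real.log (1-u))) u := by
  have e1 : (0:ℝ) < 1 + u := by linarith
  have e2 : (0:ℝ) < 1 - u := by linarith
  have e3 : (1:ℝ) - u^2 ≠ 0 := by nlinarith
  have t1 := (hasDerivAt_id u).mul ((hasDerivAt_log1p h1).sub (hasDerivAt_log1m h2))
  have t2 := (hasDerivAt_Faux h1 h2).const_mul (2:ℝ)
  have d := t1.sub t2
  refine d.congr_deriv ?_
  simp only [id, Pi.sub_apply]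
  field_simp
  ring

lemma hasDerivAt_g {u : ℝ} (h0 : u ≠ 0) (h1 : -1 < u) (h2 : u < 1) :
    HasDerivAt (fun u : ℝ => Faux u / u^2)
      ((u * (Real.log (1+u) - Real.log (1-u)) - 2 * Faux u) / u^3) u := by
  have d := (hasDerivAt_Faux h1 h2).div (hasDerivAt_pow 2 u) (pow_ne_zero 2 h0)
  refine d.congr_deriv ?_
  unfold Faux
  field_simp
  ring

lemma phi_nonneg {u : ℝ} (h0 : 0 ≤ u) (h1 : u < 1) :
    0 ≤ 2*u/(1-u^2) - (Real.log (1+u) - Real.log (1-u)) := by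
  have mono : MonotoneOn (fun u : ℝ => 2*u/(1-u^2) - (Real.log (1+u) - Real.log (1-u)))
      (Set.Ico (0:ℝ) 1) := by
    apply monotoneOn_of_deriv_nonneg (convex_Ico 0 1)
    · intro x hx
      exact (hasDerivAt_phi (by linarith [hx.1]) hx.2).differentiableAt.continuousAt.continuousWithinAt
    · intro x hx
      rw [interior_Ico] at hx
      exact (hasDerivAt_phi (by linarith [hx.1]) hx.2).differentiableAt.differentiableWithinAt
    · intro x hx
      rw [interior_Ico] at hx
      rw [(hasDerivAt_phi (by linarith [hx.1]) hx.2).deriv]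
      have : (1:ℝ) - x^2 ≠ 0 := by nlinarith [hx.1, hx.2]
      positivity
  have h := mono (show (0:ℝ) ∈ Set.Ico (0:ℝ) 1 by constructor <;> norm_num)
    (show u ∈ Set.Ico (0:ℝ) 1 from ⟨h0, h1⟩) h0
  simpa using h

lemma D_nonneg {u : ℝ} (h0 : 0 ≤ u) (h1 : u < 1) :
    0 ≤ u * (Real.log (1+u) - Real.log (1-u)) - 2 * Faux u := by
  have mono : MonotoneOn (fun u : ℝ => u * (Real.log (1+u) - Real.log (1-u)) - 2 * Faux u)
      (Set.Ico (0:ℝ) 1) := by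
    apply monotoneOn_of_deriv_nonneg (convex_Ico 0 1)
    · intro x hx
      exact (hasDerivAt_D (by linarith [hx.1]) hx.2).differentiableAt.continuousAt.continuousWithinAt
    · intro x hx
      rw [interior_Ico] at hx
      exact (hasDerivAt_D (by linarith [hx.1]) hx.2).differentiableAt.differentiableWithinAt
    · intro x hx
      rw [interior_Ico] at hx
      rw [(hasDerivAt_D (by linarith [hx.1]) hx.2).deriv]
      exact phi_nonneg hx.1.le hx.2
  have h := mono (show (0:ℝ) ∈ Set.Ico (0:ℝ) 1 by constructor <;> norm_num)
    (show u ∈ Set.Ico (0:ℝ) 1 from ⟨h0, h1⟩) h0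
  simpa [Faux] using h

lemma continuous_Faux : Continuous Faux := by
  unfold Faux
  exact ((Real.continuous_mul_log.comp (continuous_const.add continuous_id)).add
    (Real.continuous_mul_log.comp (continuous_const.sub continuous_id)))

lemma Fbound {u : ℝ} (h0 : 0 ≤ u) (h1 : u ≤ 1) : Faux u ≤ 2 * Real.log 2 * u^2 := by
  rcases eq_or_lt_of_le h0 with h | h
  · simp [Faux, ← h]
  · have mono : MonotoneOn (fun u : ℝ => Faux u / u^2) (Set.Ioc (0:ℝ) 1) := by
      apply monotoneOn_of_deriv_nonneg (convex_Ioc 0 1)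
      · exact (continuous_Faux.continuousOn).div (continuous_pow 2).continuousOn
          (fun x hx => pow_ne_zero 2 (ne_of_gt hx.1))
      · intro x hx
        rw [interior_Ioc] at hx
        exact (hasDerivAt_g (ne_of_gt hx.1) (by linarith [hx.1]) hx.2).differentiableAt.differentiableWithinAt
      · intro x hx
        rw [interior_Ioc] at hx
        rw [(hasDerivAt_g (ne_of_gt hx.1) (by linarith [hx.1]) hx.2).deriv]
        exact div_nonneg (D_nonneg hx.1.le hx.2) (pow_pos hx.1 3).le
    have h2 := mono (show u ∈ Set.Ioc (0:ℝ) 1 from ⟨h, h1⟩)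
      (show (1:ℝ) ∈ Set.Ioc (0:ℝ) 1 by constructor <;> norm_num) h1
    have hF1 : Faux 1 = 2 * Real.log 2 := by
      simp [Faux]
      ring
    rw [div_le_iff₀ (by positivity)] at h2
    simp only [hF1, one_pow, div_one] at h2
    linarith [h2]

lemma Faux_neg (u : ℝ) : Faux (-u) = Faux u := by
  unfold Faux
  rw [show (1:ℝ) + -u = 1 - u by ring, show (1:ℝ) - -u = 1 + u by ring]
  ring

lemma Fbound' {u : ℝ} (h : |u| ≤ 1) : Faux u ≤ 2 * Real.log 2 * u^2 := by
  rcases le_or_gt 0 u with h0 | h0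
  · exact Fbound h0 (by rwa [abs_of_nonneg h0] at h)
  · have := Fbound (u := -u) (by linarith) (by rwa [abs_of_neg h0] at h)
    rw [Faux_neg] at this
    simpa using this

lemma key_ineq (a b : ℝ) (ha : 0 ≤ a) (hb : 0 ≤ b) :
    Real.log 2 * (4*a*b/(a+b)) ≤
      Real.negMulLog a + Real.negMulLog b - Real.negMulLog (a+b) := by
  obtain rfl | ha0 := ha.eq_or_lt
  · simp
  obtain rfl | hb0 := hb.eq_or_lt
  · simp
  have hs : 0 < a + b := by positivity
  set s := a + b with hs_def
  set u := (b - a)/s with hu_def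
  have h1 : 1 + u = 2*b/s := by rw [hu_def]; field_simp; ring
  have h2 : 1 - u = 2*a/s := by rw [hu_def]; field_simp; ring
  have l1 : Real.log (2*b/s) = Real.log 2 + Real.log b - Real.log s := by
    rw [Real.log_div (by positivity) hs.ne', Real.log_mul two_ne_zero hb0.ne']
  have l2 : Real.log (2*a/s) = Real.log 2 + Real.log a - Real.log s := by
    rw [Real.log_div (by positivity) hs.ne', Real.log_mul two_ne_zero ha0.ne']
  have ident : Real.negMulLog a + Real.negMulLog b - Real.negMulLog s
      = s * Real.log 2 - (s/2) * Faux u := by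
    simp only [Real.negMulLog, Faux, h1, h2, l1, l2]
    field_simp
    ring
  have hub : |u| ≤ 1 := by
    rw [hu_def, abs_div, abs_of_pos hs, div_le_one hs, abs_sub_le_iff]
    constructor <;> [linarith; linarith]
  have hF := Fbound' hub
  have hsu : s - s*u^2 = 4*a*b/s := by rw [hu_def]; field_simp; ring
  have step : (s/2) * Faux u ≤ (s/2) * (2*Real.log 2 * u^2) :=
    mul_le_mul_of_nonneg_left hF (by positivity)
  rw [ident, ← hsu]
  have hr : Real.log 2 * (s - s*u^2) = s*Real.log 2 - (s/2)*(2*Real.log 2*u^2) := by ring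
  linarith

/-- For a pair of finite random variables (X,Y) with X binary, the
conditional entropy (in bits) satisfies H(X|Y) ≥ Z(X|Y)², where
H(X|Y) = H(X,Y) − H(Y) and Z is the Bhattacharyya parameter. -/
theorem condEntropy_ge_bhattacharyya_sq {Y : Type*} [Fintype Y] (p : Bool × Y → ℝ)
    (hp : ∀ z, 0 ≤ p z) (hsum : ∑ z, p z = 1) :
    ((∑ z : Bool × Y, Real.negMulLog (p z)) - ∑ y, Real.negMulLog (∑ x, p (x, y))) /
        Real.log 2
      ≥ (2 * ∑ y, Real.sqrt (p (false, y) * p (true, y))) ^ 2 := by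
  have hlog2 : 0 < Real.log 2 := Real.log_pos one_lt_two
  -- rewrite numerator
  have hL : (∑ z : Bool × Y, Real.negMulLog (p z)) - ∑ y, Real.negMulLog (∑ x, p (x, y))
      = ∑ y, (Real.negMulLog (p (false, y)) + Real.negMulLog (p (true, y))
          - Real.negMulLog (p (false, y) + p (true, y))) := by
    rw [Fintype.sum_prod_type, Fintype.sum_bool, ← Finset.sum_add_distrib,
      ← Finset.sum_sub_distrib]
    refine Finset.sum_congr rfl fun y _ => ?_
    rw [Fintype.sum_bool, add_comm (p (true, y)) (p (false, y))]
    ring_nf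
  -- total mass
  have hs1 : ∑ y, (p (false, y) + p (true, y)) = 1 := by
    rw [← hsum, Fintype.sum_prod_type, Fintype.sum_bool, ← Finset.sum_add_distrib]
    exact Finset.sum_congr rfl fun y _ => by rw [add_comm]
  -- Cauchy-Schwarz
  have hCS : (∑ y, Real.sqrt (p (false, y) * p (true, y)))^2
      ≤ (∑ y, (p (false, y) + p (true, y)))
        * ∑ y, p (false, y) * p (true, y) / (p (false, y) + p (true, y)) := by
    apply Finset.sum_sq_le_sum_mul_sum_of_sq_eq_mul
    · intro y _; have := hp (false, y); have := hp (true, y); positivity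
    · intro y _; have := hp (false, y); have := hp (true, y); positivity
    · intro y _
      rw [Real.sq_sqrt (mul_nonneg (hp (false, y)) (hp (true, y)))]
      rcases eq_or_ne (p (false, y) + p (true, y)) 0 with h | h
      · have h1 : p (false, y) = 0 := le_antisymm (by linarith [hp (true, y)]) (hp (false, y))
        simp [h1]
      · field_simp
  rw [hs1, one_mul] at hCS
  -- per-symbol bound summed
  have hsumkey : Real.log 2 * (4 * ∑ y, p (false, y) * p (true, y) / (p (false, y) + p (true, y)))
      ≤ ∑ y, (Real.negMulLog (p (false, y)) + Real.negMulLog (p (true, y))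
          - Real.negMulLog (p (false, y) + p (true, y))) := by
    calc Real.log 2 * (4 * ∑ y, p (false, y) * p (true, y) / (p (false, y) + p (true, y)))
        = ∑ y, Real.log 2 * (4 * p (false, y) * p (true, y) / (p (false, y) + p (true, y))) := by
          rw [Finset.mul_sum, Finset.mul_sum]
          exact Finset.sum_congr rfl fun y _ => by ring
      _ ≤ _ := Finset.sum_le_sum fun y _ =>
          key_ineq (p (false, y)) (p (true, y)) (hp (false, y)) (hp (true, y))
  rw [ge_iff_le, hL, le_div_iff₀ hlog2]
  calc (2 * ∑ y, Real.sqrt (p (false, y) * p (true, y))) ^ 2 * Real.log 2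
      = Real.log 2 * (4 * (∑ y, Real.sqrt (p (false, y) * p (true, y)))^2) := by ring
    _ ≤ Real.log 2 * (4 * ∑ y, p (false, y) * p (true, y) / (p (false, y) + p (true, y))) := by
        apply mul_le_mul_of_nonneg_left _ hlog2.le
        linarith [hCS]
    _ ≤ _ := hsumkey
end

section
/- Conditioning on additional side information cannot increase the Bhattacharyya parameter: for random variables X (binary), Y, and W on finite alphabets, Z(X | Y, W) ≤ Z(X | Y). -/
lemma sum_sqrt_mul_le {W : Type*} [Fintype W] (a b : W → ℝ)
    (ha : ∀ w, 0 ≤ a w) (hb : ∀ w, 0 ≤ b w) :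
    ∑ w, Real.sqrt (a w * b w) ≤ Real.sqrt ((∑ w, a w) * (∑ w, b w)) := by
  have h1 : ∑ w, Real.sqrt (a w * b w) = ∑ w, Real.sqrt (a w) * Real.sqrt (b w) := by
    simp [Real.sqrt_mul (ha _)]
  rw [h1]
  have key := Finset.sum_mul_sq_le_sq_mul_sq Finset.univ (fun w => Real.sqrt (a w))
    (fun w => Real.sqrt (b w))
  simp only [Real.sq_sqrt (ha _), Real.sq_sqrt (hb _)] at key
  have hnn : 0 ≤ ∑ w, Real.sqrt (a w) * Real.sqrt (b w) :=
    Finset.sum_nonneg fun w _ => mul_nonneg (Real.sqrt_nonneg _) (Real.sqrt_nonneg _)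
  exact (Real.le_sqrt hnn (mul_nonneg (Finset.sum_nonneg fun w _ => ha w) (Finset.sum_nonneg fun w _ => hb w))).2 key

/-- Conditioning on additional side information cannot increase the
Bhattacharyya parameter: Z(X|Y,W) ≤ Z(X|Y), where Z(X|Y) is computed from the
marginal of the joint distribution p of (X,Y,W). -/
theorem bhattacharyya_side_info {Y W : Type*} [Fintype Y] [Fintype W]
    (p : Bool × Y × W → ℝ) (hp : ∀ z, 0 ≤ p z) (hsum : ∑ z, p z = 1) :
    2 * ∑ z : Y × W, Real.sqrt (p (false, z.1, z.2) * p (true, z.1, z.2))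
      ≤ 2 * ∑ y, Real.sqrt ((∑ w, p (false, y, w)) * (∑ w, p (true, y, w))) := by
  rw [Fintype.sum_prod_type]
  gcongr with y _
  exact sum_sqrt_mul_le _ _ (fun w => hp _) (fun w => hp _)
end

section
/- If a channel P₂ : 𝒳 → 𝒴₂ is degraded with respect to P₁ : 𝒳 → 𝒴₁ (i.e., P₂ = P₃ ∘ P₁ for some channel P₃ : 𝒴₁ → 𝒴₂), then for any input distribution on X, Z(X|Y₁) ≤ Z(X|Y₂), where Yᵢ is the output of channel Pᵢ on input X. -/
/-- If channel P₂ : {0,1} → 𝒴₂ is degraded with respect to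
P₁ : {0,1} → 𝒴₁ (i.e. P₂ = P₃ ∘ P₁ for some channel P₃), then for any input
distribution pX, Z(X|Y₁) ≤ Z(X|Y₂), where Yᵢ is the output of Pᵢ on input X and
Z is the Bhattacharyya parameter of the joint law pX(x)·Pᵢ(y|x). -/
theorem bhattacharyya_degraded {Y1 Y2 : Type*} [Fintype Y1] [Fintype Y2]
    (P1 : Bool → Y1 → ℝ) (P2 : Bool → Y2 → ℝ)
    (h1 : ∀ x, (∀ y, 0 ≤ P1 x y) ∧ ∑ y, P1 x y = 1)
    (h2 : ∀ x, (∀ y, 0 ≤ P2 x y) ∧ ∑ y, P2 x y = 1)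
    (hdeg : ∃ P3 : Y1 → Y2 → ℝ,
      (∀ y1, (∀ y2, 0 ≤ P3 y1 y2) ∧ ∑ y2, P3 y1 y2 = 1) ∧
      ∀ x y2, P2 x y2 = ∑ y1, P1 x y1 * P3 y1 y2)
    (pX : Bool → ℝ) (hpX : ∀ x, 0 ≤ pX x) (hpX1 : ∑ x, pX x = 1) :
    2 * ∑ y1, Real.sqrt ((pX false * P1 false y1) * (pX true * P1 true y1))
      ≤ 2 * ∑ y2, Real.sqrt ((pX false * P2 false y2) * (pX true * P2 true y2)) := by
  obtain ⟨P3, hP3, hcomp⟩ := hdeg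
  set a : Y1 → ℝ := fun y1 => pX false * P1 false y1 with ha
  set b : Y1 → ℝ := fun y1 => pX true * P1 true y1 with hb
  have hanneg : ∀ y1, 0 ≤ a y1 := fun y1 => mul_nonneg (hpX false) ((h1 false).1 y1)
  have hbnneg : ∀ y1, 0 ≤ b y1 := fun y1 => mul_nonneg (hpX true) ((h1 true).1 y1)
  have key : ∑ y1, Real.sqrt (a y1 * b y1)
      ≤ ∑ y2, Real.sqrt ((pX false * P2 false y2) * (pX true * P2 true y2)) := by
    calc ∑ y1, Real.sqrt (a y1 * b y1)
        = ∑ y1, ∑ y2, Real.sqrt (a y1 * P3 y1 y2) * Real.sqrt (b y1 * P3 y1 y2) := by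
          refine Finset.sum_congr rfl fun y1 _ => ?_
          have heq : ∀ y2, Real.sqrt (a y1 * P3 y1 y2) * Real.sqrt (b y1 * P3 y1 y2)
              = Real.sqrt (a y1 * b y1) * P3 y1 y2 := by
            intro y2
            rw [← Real.sqrt_mul (mul_nonneg (hanneg y1) ((hP3 y1).1 y2)),
              show a y1 * P3 y1 y2 * (b y1 * P3 y1 y2)
                = a y1 * b y1 * (P3 y1 y2 * P3 y1 y2) by ring,
              Real.sqrt_mul (mul_nonneg (hanneg y1) (hbnneg y1)),
              Real.sqrt_mul_self ((hP3 y1).1 y2)]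
          simp only [heq, ← Finset.mul_sum, (hP3 y1).2, mul_one]
      _ = ∑ y2, ∑ y1, Real.sqrt (a y1 * P3 y1 y2) * Real.sqrt (b y1 * P3 y1 y2) :=
          Finset.sum_comm
      _ ≤ ∑ y2, Real.sqrt ((pX false * P2 false y2) * (pX true * P2 true y2)) := by
          refine Finset.sum_le_sum fun y2 _ => ?_
          have := Real.sum_sqrt_mul_sqrt_le (f := fun y1 => a y1 * P3 y1 y2)
            (g := fun y1 => b y1 * P3 y1 y2) Finset.univ
            (fun y1 => mul_nonneg (hanneg y1) ((hP3 y1).1 y2))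
            (fun y1 => mul_nonneg (hbnneg y1) ((hP3 y1).1 y2))
          refine this.trans_eq ?_
          rw [← Real.sqrt_mul (Finset.sum_nonneg fun y1 _ =>
            mul_nonneg (hanneg y1) ((hP3 y1).1 y2))]
          have e1 : ∑ y1, a y1 * P3 y1 y2 = pX false * P2 false y2 := by
            rw [hcomp false y2, Finset.mul_sum]; simp [ha, mul_assoc]
          have e2 : ∑ y1, b y1 * P3 y1 y2 = pX true * P2 true y2 := by
            rw [hcomp true y2, Finset.mul_sum]; simp [hb, mul_assoc]
          rw [e1, e2]
  linarith
end

section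
/- For the single-step polar transform of a binary erasure channel, the Bhattacharyya parameters satisfy Z⁻ = 2Z − Z² and Z⁺ = Z²: if X₁, X₂ are i.i.d. uniform bits observed through independent BEC(ε) outputs Y₁, Y₂, and U₁ = X₁ ⊕ X₂, U₂ = X₂, then Z(U₁ | Y₁,Y₂) = 2ε − ε² and Z(U₂ | Y₁,Y₂,U₁) = ε². -/
/-- The binary erasure channel BEC(ε): input x is received with probability 1-ε
and erased (output `none`) with probability ε. -/
noncomputable def bec (ε : ℝ) : Bool → Option Bool → ℝ := fun x y =>
  match y with
  | some b => if b = x then 1 - ε else 0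
  | none => ε

/-- Single-step polar transform of a BEC(ε) with i.i.d. uniform
inputs X₁,X₂, U₁ = X₁ ⊕ X₂, U₂ = X₂: Z(U₁|Y₁,Y₂) = 2ε − ε² and
Z(U₂|Y₁,Y₂,U₁) = ε², with Z the Bhattacharyya parameter of the joint laws
q(u₁,(y₁,y₂)) = ∑_{x₂} (1/4)·bec(ε)(u₁⊕x₂)(y₁)·bec(ε)(x₂)(y₂) and
r(u₂,((y₁,y₂),u₁)) = (1/4)·bec(ε)(u₁⊕u₂)(y₁)·bec(ε)(u₂)(y₂). -/
theorem polar_transform_bec (ε : ℝ) (h0 : 0 ≤ ε) (h1 : ε ≤ 1) :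
    (2 * ∑ y : Option Bool × Option Bool,
        Real.sqrt ((∑ x2 : Bool, (1/4 : ℝ) * bec ε (xor false x2) y.1 * bec ε x2 y.2) *
          (∑ x2 : Bool, (1/4 : ℝ) * bec ε (xor true x2) y.1 * bec ε x2 y.2))
      = 2 * ε - ε ^ 2) ∧
    (2 * ∑ z : (Option Bool × Option Bool) × Bool,
        Real.sqrt (((1/4 : ℝ) * bec ε (xor z.2 false) z.1.1 * bec ε false z.1.2) *
          ((1/4 : ℝ) * bec ε (xor z.2 true) z.1.1 * bec ε true z.1.2))
      = ε ^ 2) := by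
  have key : ∀ a : ℝ, 0 ≤ a → Real.sqrt (a * a) = a := fun a ha => Real.sqrt_mul_self ha
  have hε1 : (0:ℝ) ≤ 1 - ε := by linarith
  constructor
  · simp only [Fintype.sum_prod_type, Fintype.sum_option, bec]
    simp
    rw [key _ (by nlinarith), key _ (by nlinarith), key _ (by nlinarith)]
    ring
  · simp only [Fintype.sum_prod_type, Fintype.sum_option, bec]
    simp
    rw [key _ (by nlinarith)]
    ring
end

section
/- Information leakage bound via single-index conditional entropies: let M, E, F, Y be finite random variables where (M,E,F) is determined by a vector S^{1:n} via disjoint index sets A (for (M,E)) and B (for F), with the components {Sⁱ}_{i∈A∪B} mutually independent and uniform on {0,1}. Then I(M,E; Y | F) ≤ ∑_{i∈A∪B} (1 − H(Sⁱ | Y, S^{1:i−1})). -/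
noncomputable def distOf {Ω α : Type*} [Fintype Ω] [DecidableEq α]
    (p : Ω → ℝ) (f : Ω → α) : α → ℝ :=
  fun a => ∑ ω ∈ Finset.univ.filter (fun ω => f ω = a), p ω

noncomputable def entOf {Ω α : Type*} [Fintype Ω] [Fintype α] [DecidableEq α]
    (p : Ω → ℝ) (f : Ω → α) : ℝ :=
  (∑ a, Real.negMulLog (distOf p f a)) / Real.log 2

noncomputable def condEntOf {Ω α β : Type*} [Fintype Ω] [Fintype α] [DecidableEq α]
    [Fintype β] [DecidableEq β] (p : Ω → ℝ) (f : Ω → α) (g : Ω → β) : ℝ :=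
  entOf p (fun ω => (f ω, g ω)) - entOf p g

/-- Conditional mutual information I(f ; g | h) = H(f|h) − H(f|g,h), in bits. -/
noncomputable def condMutInfoOf {Ω α β γ : Type*} [Fintype Ω] [Fintype α] [DecidableEq α]
    [Fintype β] [DecidableEq β] [Fintype γ] [DecidableEq γ]
    (p : Ω → ℝ) (f : Ω → α) (g : Ω → β) (h : Ω → γ) : ℝ :=
  condEntOf p f h - condEntOf p f (fun ω => (g ω, h ω))

section Basic
variable {Ω α β : Type*} [Fintype Ω] [Fintype α] [DecidableEq α] [Fintype β] [DecidableEq β]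
  (p : Ω → ℝ)

lemma distOf_nonneg (hp : ∀ ω, 0 ≤ p ω) (f : Ω → α) (a : α) : 0 ≤ distOf p f a :=
  Finset.sum_nonneg fun ω _ => hp ω

lemma sum_distOf (hp1 : ∑ ω, p ω = 1) (f : Ω → α) : ∑ a, distOf p f a = 1 := by
  unfold distOf
  rw [← hp1]
  simp only [Finset.sum_filter]
  rw [Finset.sum_comm]
  simp

lemma distOf_comp (f : Ω → α) (φ : α → β) (b : β) :
    distOf p (fun ω => φ (f ω)) b = ∑ a ∈ Finset.univ.filter (fun a => φ a = b), distOf p f a := by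
  classical
  rw [eq_comm]
  calc ∑ a ∈ Finset.univ.filter (fun a => φ a = b), distOf p f a
      = ∑ a ∈ Finset.univ.filter (fun a => φ a = b), ∑ ω, if f ω = a then p ω else 0 := by
        simp [distOf, Finset.sum_filter]
    _ = ∑ ω, ∑ a ∈ Finset.univ.filter (fun a => φ a = b), if f ω = a then p ω else 0 :=
        Finset.sum_comm
    _ = distOf p (fun ω => φ (f ω)) b := by
        simp [distOf, Finset.sum_filter, Finset.sum_ite_eq]

end Basic

set_option linter.unusedSectionVars false

section Inv
variable {Ω α β : Type*} [Fintype Ω] [Fintype α] [DecidableEq α] [Fintype β] [DecidableEq β]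
  (p : Ω → ℝ)

lemma distOf_comp_inj (f : Ω → α) (e : α → β) (he : Function.Injective e) (a : α) :
    distOf p (fun ω => e (f ω)) (e a) = distOf p f a := by
  unfold distOf
  refine Finset.sum_congr ?_ fun _ _ => rfl
  ext ω; simp [he.eq_iff]

lemma distOf_comp_eq_zero (f : Ω → α) (e : α → β) (b : β) (hb : ∀ a, e a ≠ b) :
    distOf p (fun ω => e (f ω)) b = 0 := by
  unfold distOf
  rw [Finset.sum_eq_zero]
  intro ω hω
  simp only [Finset.mem_filter] at hω
  exact absurd hω.2 (hb (f ω))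

lemma entOf_comp_inj (f : Ω → α) (f' : Ω → β) (e : α → β) (he : Function.Injective e)
    (hfe : ∀ ω, f' ω = e (f ω)) : entOf p f' = entOf p f := by
  have hf' : f' = fun ω => e (f ω) := funext hfe
  subst hf'
  unfold entOf
  congr 1
  rw [← Finset.sum_subset (Finset.subset_univ (Finset.univ.image e))]
  · rw [Finset.sum_image (fun a _ a' _ h => he h)]
    exact Finset.sum_congr rfl fun a _ => by rw [distOf_comp_inj p f e he]
  · intro b _ hb
    simp only [Finset.mem_image, Finset.mem_univ, true_and] at hb
    rw [distOf_comp_eq_zero p f e b (fun a h => hb ⟨a, h⟩), Real.negMulLog_zero]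

lemma entOf_const (hp : ∀ ω, 0 ≤ p ω) (hp1 : ∑ ω, p ω = 1) (c : α) :
    entOf p (fun _ => c) = 0 := by
  unfold entOf
  rw [Finset.sum_eq_single c]
  · have : distOf p (fun _ => c) c = 1 := by
      unfold distOf; rw [← hp1]; congr 1; ext ω; simp
    rw [this, Real.negMulLog_one, zero_div]
  · intro b _ hb
    have : distOf p (fun _ => c) b = 0 := by
      unfold distOf
      rw [Finset.sum_eq_zero]
      intro ω hω
      simp only [Finset.mem_filter] at hω
      exact absurd hω.2 (Ne.symm hb)
    rw [this, Real.negMulLog_zero]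
  · simp

end Inv

section Key
open Real

lemma sum3_left {ι κ μ : Type*} {N : Type*} [Fintype ι] [Fintype κ] [Fintype μ]
    [AddCommMonoid N] (f : ι → κ → μ → N) :
    ∑ a, ∑ b, ∑ c, f a b c = ∑ c, ∑ a, ∑ b, f a b c := by
  rw [show (∑ a, ∑ b, ∑ c, f a b c) = ∑ a, ∑ c, ∑ b, f a b c from
    Finset.sum_congr rfl fun a _ => Finset.sum_comm]
  exact Finset.sum_comm

lemma key {α β δ : Type*} [Fintype α] [Fintype β] [Fintype δ]
    (q : α → β → δ → ℝ) (hq : ∀ a b c, 0 ≤ q a b c)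
    (h1 : ∑ a, ∑ b, ∑ c, q a b c = 1) :
    (∑ a, ∑ b, ∑ c, Real.negMulLog (q a b c)) + ∑ c, Real.negMulLog (∑ a, ∑ b, q a b c)
      ≤ (∑ a, ∑ c, Real.negMulLog (∑ b, q a b c))
        + ∑ b, ∑ c, Real.negMulLog (∑ a, q a b c) := by
  classical
  set qac : α → δ → ℝ := fun a c => ∑ b, q a b c with hqac_def
  set qbc : β → δ → ℝ := fun b c => ∑ a, q a b c with hqbc_def
  set qc : δ → ℝ := fun c => ∑ a, ∑ b, q a b c with hqc_def
  have hqac0 : ∀ a c, 0 ≤ qac a c := fun a c => Finset.sum_nonneg fun _ _ => hq _ _ _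
  have hqbc0 : ∀ b c, 0 ≤ qbc b c := fun b c => Finset.sum_nonneg fun _ _ => hq _ _ _
  have hqc0 : ∀ c, 0 ≤ qc c := fun c =>
    Finset.sum_nonneg fun _ _ => Finset.sum_nonneg fun _ _ => hq _ _ _
  have hsum_ac : ∀ c, ∑ a, qac a c = qc c := fun c => rfl
  have hsum_bc : ∀ c, ∑ b, qbc b c = qc c := fun c => Finset.sum_comm
  -- express all four entropy sums as triple sums ordered (a, b, c)
  have e1 : (∑ a, ∑ b, ∑ c, Real.negMulLog (q a b c))
      = ∑ a, ∑ b, ∑ c, -(q a b c * Real.log (q a b c)) := by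
    simp [Real.negMulLog_eq_neg]
  have e2 : (∑ c, Real.negMulLog (qc c)) = ∑ a, ∑ b, ∑ c, -(q a b c * Real.log (qc c)) := by
    have step : (∑ c, Real.negMulLog (qc c))
        = ∑ c, ∑ a, ∑ b, -(q a b c * Real.log (qc c)) := by
      refine Finset.sum_congr rfl fun c _ => ?_
      simp [Real.negMulLog_eq_neg, hqc_def, Finset.sum_mul]
    rw [step, Finset.sum_comm]
    exact Finset.sum_congr rfl fun a _ => Finset.sum_comm
  have e3 : (∑ a, ∑ c, Real.negMulLog (qac a c))
      = ∑ a, ∑ b, ∑ c, -(q a b c * Real.log (qac a c)) := by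
    refine Finset.sum_congr rfl fun a _ => ?_
    have step : (∑ c, Real.negMulLog (qac a c))
        = ∑ c, ∑ b, -(q a b c * Real.log (qac a c)) := by
      refine Finset.sum_congr rfl fun c _ => ?_
      simp [Real.negMulLog_eq_neg, hqac_def, Finset.sum_mul]
    rw [step]
    exact Finset.sum_comm
  have e4 : (∑ b, ∑ c, Real.negMulLog (qbc b c))
      = ∑ a, ∑ b, ∑ c, -(q a b c * Real.log (qbc b c)) := by
    have step : (∑ b, ∑ c, Real.negMulLog (qbc b c))
        = ∑ b, ∑ c, ∑ a, -(q a b c * Real.log (qbc b c)) := by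
      refine Finset.sum_congr rfl fun b _ => Finset.sum_congr rfl fun c _ => ?_
      simp [Real.negMulLog_eq_neg, hqbc_def, Finset.sum_mul]
    rw [step]
    rw [show (∑ b, ∑ c, ∑ a, -(q a b c * Real.log (qbc b c)))
        = ∑ b, ∑ a, ∑ c, -(q a b c * Real.log (qbc b c)) from
      Finset.sum_congr rfl fun b _ => Finset.sum_comm]
    exact Finset.sum_comm
  -- the per-term correction
  set R : α → β → δ → ℝ := fun a b c =>
    (if 0 < q a b c then qac a c * qbc b c / qc c else 0) - q a b c with hR_def
  have hLR : ∀ a b c,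
      (-(q a b c * Real.log (q a b c)) + -(q a b c * Real.log (qc c)))
        - (-(q a b c * Real.log (qac a c)) + -(q a b c * Real.log (qbc b c)))
      ≤ R a b c := by
    intro a b c
    rcases lt_or_eq_of_le (hq a b c) with hpos | hzero
    · have hac : 0 < qac a c :=
        lt_of_lt_of_le hpos (Finset.single_le_sum (fun b' _ => hq a b' c) (Finset.mem_univ b))
      have hbc : 0 < qbc b c :=
        lt_of_lt_of_le hpos (Finset.single_le_sum (fun a' _ => hq a' b c) (Finset.mem_univ a))
      have hc : 0 < qc c := by
        refine lt_of_lt_of_le hac ?_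
        exact Finset.single_le_sum (fun a' _ => hqac0 a' c) (Finset.mem_univ a)
      have hlog : Real.log (qac a c) + Real.log (qbc b c)
          - Real.log (q a b c) - Real.log (qc c)
          = Real.log ((qac a c * qbc b c) / (q a b c * qc c)) := by
        rw [Real.log_div (by positivity) (by positivity), Real.log_mul hac.ne' hbc.ne',
          Real.log_mul hpos.ne' hc.ne']
        ring
      have hx : 0 < (qac a c * qbc b c) / (q a b c * qc c) := by positivity
      have hbound := Real.log_le_sub_one_of_pos hx
      have h2 : q a b c * ((qac a c * qbc b c) / (q a b c * qc c) - 1)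
          = qac a c * qbc b c / qc c - q a b c := by
        field_simp
      calc (-(q a b c * Real.log (q a b c)) + -(q a b c * Real.log (qc c)))
            - (-(q a b c * Real.log (qac a c)) + -(q a b c * Real.log (qbc b c)))
          = q a b c * (Real.log (qac a c) + Real.log (qbc b c)
              - Real.log (q a b c) - Real.log (qc c)) := by ring
        _ = q a b c * Real.log ((qac a c * qbc b c) / (q a b c * qc c)) := by rw [hlog]
        _ ≤ q a b c * ((qac a c * qbc b c) / (q a b c * qc c) - 1) :=
            mul_le_mul_of_nonneg_left hbound hpos.le
        _ = qac a c * qbc b c / qc c - q a b c := h2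
        _ = R a b c := by rw [hR_def]; simp [hpos]
    · rw [hR_def]
      simp [← hzero]
  have hRsum : ∑ a, ∑ b, ∑ c, R a b c ≤ 0 := by
    have hsplit : ∑ a, ∑ b, ∑ c, R a b c
        = (∑ a, ∑ b, ∑ c, (if 0 < q a b c then qac a c * qbc b c / qc c else 0))
          - ∑ a, ∑ b, ∑ c, q a b c := by
      simp [hR_def, Finset.sum_sub_distrib]
    rw [hsplit, h1, sub_nonpos]
    have step1 : (∑ a, ∑ b, ∑ c, (if 0 < q a b c then qac a c * qbc b c / qc c else 0))
        ≤ ∑ a, ∑ b, ∑ c, (if 0 < qc c then qac a c * qbc b c / qc c else 0) := by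
      refine Finset.sum_le_sum fun a _ => Finset.sum_le_sum fun b _ =>
        Finset.sum_le_sum fun c _ => ?_
      by_cases hpos : 0 < q a b c
      · have hc : 0 < qc c := by
          have hac : 0 < qac a c :=
            lt_of_lt_of_le hpos (Finset.single_le_sum (fun b' _ => hq a b' c) (Finset.mem_univ b))
          exact lt_of_lt_of_le hac
            (Finset.single_le_sum (fun a' _ => hqac0 a' c) (Finset.mem_univ a))
        simp [hpos, hc]
      · simp only [hpos, if_false]
        by_cases hc : 0 < qc c
        · simp only [hc, if_true]
          exact div_nonneg (mul_nonneg (hqac0 a c) (hqbc0 b c)) (hqc0 c)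
        · simp [hc]
    refine le_trans step1 ?_
    have step2 : (∑ a, ∑ b, ∑ c, (if 0 < qc c then qac a c * qbc b c / qc c else 0))
        = ∑ c, (if 0 < qc c then qc c else 0) := by
      rw [sum3_left]
      refine Finset.sum_congr rfl fun c _ => ?_
      by_cases hc : 0 < qc c
      · simp only [hc, if_true]
        have hmul : ∑ a, ∑ b, qac a c * qbc b c / qc c
            = (∑ a, qac a c) * (∑ b, qbc b c) / qc c := by
          rw [Finset.sum_mul_sum, Finset.sum_div]
          exact Finset.sum_congr rfl fun a _ => (Finset.sum_div _ _ _).symm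
        rw [hmul, hsum_ac, hsum_bc]
        field_simp
      · simp [hc]
    refine le_trans (le_of_eq step2) ?_
    have hmono : ∑ c, (if 0 < qc c then qc c else 0) ≤ ∑ c, qc c := by
      refine Finset.sum_le_sum fun c _ => ?_
      by_cases hc : 0 < qc c
      · simp [hc]
      · simp [hc, hqc0 c]
    refine le_trans hmono (le_of_eq ?_)
    calc ∑ c, qc c = ∑ c, ∑ a, ∑ b, q a b c := rfl
      _ = ∑ a, ∑ b, ∑ c, q a b c := (sum3_left _).symm
      _ = 1 := h1
  calc (∑ a, ∑ b, ∑ c, Real.negMulLog (q a b c)) + ∑ c, Real.negMulLog (qc c)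
      = (∑ a, ∑ b, ∑ c, (-(q a b c * Real.log (q a b c)) + -(q a b c * Real.log (qc c)))) := by
        rw [e1, e2]; simp [Finset.sum_add_distrib]
    _ ≤ (∑ a, ∑ b, ∑ c, ((-(q a b c * Real.log (qac a c)) + -(q a b c * Real.log (qbc b c)))
          + R a b c)) := by
        refine Finset.sum_le_sum fun a _ => Finset.sum_le_sum fun b _ =>
          Finset.sum_le_sum fun c _ => ?_
        have := hLR a b c
        linarith
    _ = (∑ a, ∑ b, ∑ c, (-(q a b c * Real.log (qac a c)) + -(q a b c * Real.log (qbc b c))))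
          + ∑ a, ∑ b, ∑ c, R a b c := by
        simp [Finset.sum_add_distrib]
    _ ≤ (∑ a, ∑ b, ∑ c, (-(q a b c * Real.log (qac a c)) + -(q a b c * Real.log (qbc b c)))) := by
        linarith [hRsum]
    _ = (∑ a, ∑ c, Real.negMulLog (qac a c)) + ∑ b, ∑ c, Real.negMulLog (qbc b c) := by
        rw [e3, e4]; simp [Finset.sum_add_distrib]

end Key

section Submod
variable {Ω α β δ : Type*} [Fintype Ω] [Fintype α] [DecidableEq α] [Fintype β] [DecidableEq β]
  [Fintype δ] [DecidableEq δ]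
  (p : Ω → ℝ)

lemma submod (hp : ∀ ω, 0 ≤ p ω) (hp1 : ∑ ω, p ω = 1)
    (f : Ω → α) (g : Ω → β) (h : Ω → δ) :
    entOf p (fun ω => (f ω, g ω, h ω)) + entOf p h
      ≤ entOf p (fun ω => (f ω, h ω)) + entOf p (fun ω => (g ω, h ω)) := by
  classical
  set q : α → β → δ → ℝ := fun a b c => distOf p (fun ω => (f ω, g ω, h ω)) (a, b, c) with hq_def
  have hq0 : ∀ a b c, 0 ≤ q a b c := fun a b c => distOf_nonneg p hp _ _
  have hsum : ∑ a, ∑ b, ∑ c, q a b c = 1 := by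
    rw [← sum_distOf p hp1 (fun ω => (f ω, g ω, h ω))]
    simp only [Fintype.sum_prod_type]
    rfl
  have hfh : ∀ a c, distOf p (fun ω => (f ω, h ω)) (a, c) = ∑ b, q a b c := by
    intro a c
    have := distOf_comp p (fun ω => (f ω, g ω, h ω)) (fun x => (x.1, x.2.2)) (a, c)
    rw [show (fun ω => ((fun x : α × β × δ => (x.1, x.2.2)) ((f ω, g ω, h ω))))
      = fun ω => (f ω, h ω) from rfl] at this
    rw [this, Finset.sum_filter, Fintype.sum_prod_type]
    simp [Fintype.sum_prod_type, Prod.ext_iff, ite_and, Finset.sum_ite_eq,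
      Finset.sum_ite_eq', hq_def]
  have hgh : ∀ b c, distOf p (fun ω => (g ω, h ω)) (b, c) = ∑ a, q a b c := by
    intro b c
    have := distOf_comp p (fun ω => (f ω, g ω, h ω)) (fun x => x.2) (b, c)
    rw [show (fun ω => ((fun x : α × β × δ => x.2) ((f ω, g ω, h ω))))
      = fun ω => (g ω, h ω) from rfl] at this
    rw [this, Finset.sum_filter, Fintype.sum_prod_type]
    simp [Fintype.sum_prod_type, Prod.ext_iff, ite_and, Finset.sum_ite_eq,
      Finset.sum_ite_eq', hq_def]
  have hh : ∀ c, distOf p h c = ∑ a, ∑ b, q a b c := by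
    intro c
    have := distOf_comp p (fun ω => (f ω, g ω, h ω)) (fun x => x.2.2) c
    rw [show (fun ω => ((fun x : α × β × δ => x.2.2) ((f ω, g ω, h ω)))) = h from rfl] at this
    rw [this, Finset.sum_filter, Fintype.sum_prod_type]
    refine Finset.sum_congr rfl fun a _ => ?_
    rw [Fintype.sum_prod_type]
    simp [hq_def]
  have hkey := key q hq0 hsum
  have hlog2 : (0:ℝ) < Real.log 2 := Real.log_pos (by norm_num)
  unfold entOf
  rw [← add_div, ← add_div, div_le_div_iff_of_pos_right hlog2]
  have E1 : ∑ x : α × β × δ, Real.negMulLog (distOf p (fun ω => (f ω, g ω, h ω)) x)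
      = ∑ a, ∑ b, ∑ c, Real.negMulLog (q a b c) := by
    simp only [Fintype.sum_prod_type]
    rfl
  have E2 : ∑ c, Real.negMulLog (distOf p h c)
      = ∑ c, Real.negMulLog (∑ a, ∑ b, q a b c) :=
    Finset.sum_congr rfl fun c _ => by rw [hh]
  have E3 : ∑ x : α × δ, Real.negMulLog (distOf p (fun ω => (f ω, h ω)) x)
      = ∑ a, ∑ c, Real.negMulLog (∑ b, q a b c) := by
    rw [Fintype.sum_prod_type]
    exact Finset.sum_congr rfl fun a _ => Finset.sum_congr rfl fun c _ => by rw [hfh]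
  have E4 : ∑ x : β × δ, Real.negMulLog (distOf p (fun ω => (g ω, h ω)) x)
      = ∑ b, ∑ c, Real.negMulLog (∑ a, q a b c) := by
    rw [Fintype.sum_prod_type]
    exact Finset.sum_congr rfl fun b _ => Finset.sum_congr rfl fun c _ => by rw [hgh]
  rw [E1, E2, E3, E4]
  exact hkey

end Submod

section CondEnt
variable {Ω α β δ : Type*} [Fintype Ω] [Fintype α] [DecidableEq α] [Fintype β] [DecidableEq β]
  [Fintype δ] [DecidableEq δ]
  (p : Ω → ℝ)

lemma condEnt_pair_le (hp : ∀ ω, 0 ≤ p ω) (hp1 : ∑ ω, p ω = 1) (f : Ω → α) (g : Ω → β) (h : Ω → δ) :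
    condEntOf p f (fun ω => (g ω, h ω)) ≤ condEntOf p f h := by
  unfold condEntOf
  have h1 := submod p hp hp1 f g h
  linarith

lemma condEnt_mono_cond (hp : ∀ ω, 0 ≤ p ω) (hp1 : ∑ ω, p ω = 1) (f : Ω → α) (h' : Ω → δ) (h : Ω → β) (φ : δ → β)
    (hφ : ∀ ω, h ω = φ (h' ω)) :
    condEntOf p f h' ≤ condEntOf p f h := by
  have e1 : entOf p (fun ω => (f ω, (h' ω, h ω))) = entOf p (fun ω => (f ω, h' ω)) := by
    refine entOf_comp_inj p (fun ω => (f ω, h' ω)) _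
      (fun x : α × δ => (x.1, (x.2, φ x.2))) ?_ (fun ω => by rw [hφ ω])
    intro x y hxy
    simp only [Prod.ext_iff] at hxy ⊢
    exact ⟨hxy.1, hxy.2.1⟩
  have e2 : entOf p (fun ω => (h' ω, h ω)) = entOf p h' := by
    refine entOf_comp_inj p h' _ (fun d : δ => (d, φ d)) ?_ (fun ω => by rw [hφ ω])
    intro x y hxy
    exact congrArg Prod.fst hxy
  have : condEntOf p f h' = condEntOf p f (fun ω => (h' ω, h ω)) := by
    unfold condEntOf
    rw [e1, e2]
  rw [this]
  exact condEnt_pair_le p hp hp1 f h' h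

lemma entOf_pair_le (hp : ∀ ω, 0 ≤ p ω) (hp1 : ∑ ω, p ω = 1) (f : Ω → α) (g : Ω → β) :
    entOf p (fun ω => (f ω, g ω)) ≤ entOf p f + entOf p g := by
  have h := submod p hp hp1 f g (fun _ => (() : Unit))
  have hc : entOf p (fun _ : Ω => ()) = 0 := entOf_const p hp hp1 ()
  have e1 : entOf p (fun ω => (f ω, g ω, ())) = entOf p (fun ω => (f ω, g ω)) := by
    refine entOf_comp_inj p (fun ω => (f ω, g ω)) _
      (fun x : α × β => (x.1, x.2, ())) ?_ (fun ω => rfl)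
    intro x y hxy
    simp only [Prod.ext_iff] at hxy ⊢
    exact ⟨hxy.1, hxy.2.1⟩
  have e2 : entOf p (fun ω => (f ω, ())) = entOf p f := by
    refine entOf_comp_inj p f _ (fun a : α => (a, ())) ?_ (fun ω => rfl)
    intro x y hxy
    exact congrArg Prod.fst hxy
  have e3 : entOf p (fun ω => (g ω, ())) = entOf p g := by
    refine entOf_comp_inj p g _ (fun a : β => (a, ())) ?_ (fun ω => rfl)
    intro x y hxy
    exact congrArg Prod.fst hxy
  rw [e1, e2, e3, hc] at h
  linarith

end CondEnt

section Chain
variable {Ω γ : Type*} [Fintype Ω] [Fintype γ] [DecidableEq γ]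

lemma chain (n : ℕ) (p : Ω → ℝ) (hp : ∀ ω, 0 ≤ p ω) (hp1 : ∑ ω, p ω = 1)
    (S : Fin n → Ω → Bool) (Y : Ω → γ) (C : Finset (Fin n)) :
    ∑ i ∈ C, condEntOf p (S i)
        (fun ω => (Y ω, fun j : Fin i.1 => S (Fin.castLE i.2.le j) ω))
      ≤ condEntOf p (fun ω => fun i : {x // x ∈ C} => S i.1 ω) Y := by
  classical
  induction C using Finset.strongInduction with
  | _ C ih =>
    rcases C.eq_empty_or_nonempty with rfl | hC
    · simp only [Finset.sum_empty]
      have : entOf p (fun ω => ((fun i : {x // x ∈ (∅ : Finset (Fin n))} => S i.1 ω), Y ω))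
          = entOf p Y := by
        refine entOf_comp_inj p Y _
          (fun y => ((fun i : {x // x ∈ (∅ : Finset (Fin n))} =>
            absurd i.2 (Finset.notMem_empty _)), y)) ?_ ?_
        · intro x y hxy
          exact congrArg Prod.snd hxy
        · intro ω
          refine Prod.ext ?_ rfl
          funext j
          exact absurd j.2 (Finset.notMem_empty _)
      unfold condEntOf
      rw [this]
      simp
    · set i := C.max' hC with hi_def
      have hiC : i ∈ C := C.max'_mem hC
      set C' := C.erase i with hC'_def
      have hss : C' ⊂ C := Finset.erase_ssubset hiC
      have hIH := ih C' hss
      -- decomposition of the conditional entropy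
      have hdecomp : condEntOf p (fun ω => fun k : {x // x ∈ C} => S k.1 ω) Y
          = condEntOf p (fun ω => fun k : {x // x ∈ C'} => S k.1 ω) Y
            + condEntOf p (S i)
              (fun ω => (Y ω, fun k : {x // x ∈ C'} => S k.1 ω)) := by
        have e1 : entOf p (fun ω => (S i ω, (Y ω, fun k : {x // x ∈ C'} => S k.1 ω)))
            = entOf p (fun ω => ((fun k : {x // x ∈ C} => S k.1 ω), Y ω)) := by
          refine entOf_comp_inj p _ _
            (fun x : ({x // x ∈ C} → Bool) × γ =>
              (x.1 ⟨i, hiC⟩, (x.2, fun k : {x // x ∈ C'} =>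
                x.1 ⟨k.1, Finset.mem_of_mem_erase k.2⟩))) ?_ (fun ω => rfl)
          intro x y hxy
          simp only [Prod.ext_iff] at hxy
          refine Prod.ext ?_ hxy.2.1
          funext k
          rcases eq_or_ne k.1 i with hk | hk
          · have : k = (⟨i, hiC⟩ : {x // x ∈ C}) := Subtype.ext hk
            rw [this]; exact hxy.1
          · have hk' : k.1 ∈ C' := Finset.mem_erase.mpr ⟨hk, k.2⟩
            exact congrFun hxy.2.2 ⟨k.1, hk'⟩
        have e2 : entOf p (fun ω => (Y ω, fun k : {x // x ∈ C'} => S k.1 ω))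
            = entOf p (fun ω => ((fun k : {x // x ∈ C'} => S k.1 ω), Y ω)) := by
          refine entOf_comp_inj p _ _ Prod.swap Prod.swap_injective (fun ω => rfl)
        unfold condEntOf
        rw [e1, e2]
        ring
      rw [hdecomp]
      rw [← Finset.add_sum_erase _ _ hiC]
      rw [← hC'_def]
      have hterm : condEntOf p (S i)
          (fun ω => (Y ω, fun j : Fin i.1 => S (Fin.castLE i.2.le j) ω))
          ≤ condEntOf p (S i) (fun ω => (Y ω, fun k : {x // x ∈ C'} => S k.1 ω)) := by
        refine condEnt_mono_cond p hp hp1 (S i) _ _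
          (fun x : γ × (Fin i.1 → Bool) =>
            (x.1, fun k : {x // x ∈ C'} => x.2 ⟨k.1.1, ?_⟩)) (fun ω => ?_)
        · have hne : k.1 ≠ i := (Finset.mem_erase.mp k.2).1
          have hle : k.1 ≤ i := C.le_max' k.1 (Finset.mem_erase.mp k.2).2
          exact lt_of_le_of_ne (Fin.le_iff_val_le_val.mp hle) fun hv => hne (Fin.ext hv)
        · refine Prod.ext rfl ?_
          funext k
          rfl
      have := hIH
      linarith

end Chain

lemma entOf_uniform {Ω α : Type*} [Fintype Ω] [Fintype α] [DecidableEq α]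
    (p : Ω → ℝ) (f : Ω → α) (k : ℕ) (hcard : Fintype.card α = 2 ^ k)
    (hu : ∀ a, distOf p f a = (1/2 : ℝ) ^ k) :
    entOf p f = k := by
  have hlog2 : Real.log 2 ≠ 0 := ne_of_gt (Real.log_pos (by norm_num))
  have hneg : Real.negMulLog ((1/2 : ℝ) ^ k) = (1/2 : ℝ) ^ k * (k * Real.log 2) := by
    rw [Real.negMulLog, Real.log_pow]
    have : Real.log (1/2 : ℝ) = - Real.log 2 := by
      rw [one_div, Real.log_inv]
    rw [this]
    ring
  unfold entOf
  rw [Finset.sum_congr rfl (fun a _ => by rw [hu a, hneg]), Finset.sum_const,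
    Finset.card_univ, hcard, nsmul_eq_mul]
  have h2 : ((2:ℝ) ^ k) * ((1/2 : ℝ) ^ k) = 1 := by
    rw [one_div, inv_pow, mul_inv_cancel₀ (pow_ne_zero _ (by norm_num))]
  push_cast
  rw [← mul_assoc, h2, one_mul, mul_div_assoc, div_self hlog2, mul_one]


/-- if (M,E) consists of the bits {Sⁱ}_{i∈A} and F of {Sⁱ}_{i∈B},
with A,B disjoint and the bits {Sⁱ}_{i∈A∪B} i.i.d. uniform, then
I(M,E; Y | F) ≤ ∑_{i∈A∪B} (1 − H(Sⁱ | Y, S^{1:i−1})). -/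
theorem single_index_leakage_bound {Ω γ : Type*} [Fintype Ω] [Fintype γ] [DecidableEq γ]
    (n : ℕ) (p : Ω → ℝ) (hp : ∀ ω, 0 ≤ p ω) (hp1 : ∑ ω, p ω = 1)
    (S : Fin n → Ω → Bool) (A B : Finset (Fin n)) (hAB : Disjoint A B)
    (Y : Ω → γ)
    (hunif : ∀ v : {x // x ∈ A ∪ B} → Bool,
      distOf p (fun ω => fun i : {x // x ∈ A ∪ B} => S i.1 ω) v
        = (1/2 : ℝ) ^ (A ∪ B).card) :
    condMutInfoOf p (fun ω => fun i : {x // x ∈ A} => S i.1 ω) Y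
        (fun ω => fun i : {x // x ∈ B} => S i.1 ω)
      ≤ ∑ i ∈ A ∪ B,
          (1 - condEntOf p (S i)
            (fun ω => (Y ω, fun j : Fin i.1 => S (Fin.castLE i.2.le j) ω))) := by
  classical
  set C := A ∪ B with hC_def
  set M : Ω → ({x // x ∈ A} → Bool) := fun ω => fun i => S i.1 ω with hM_def
  set F : Ω → ({x // x ∈ B} → Bool) := fun ω => fun i => S i.1 ω with hF_def
  set T : Ω → ({x // x ∈ C} → Bool) := fun ω => fun i => S i.1 ω with hT_def
  -- entropy of the full uniform vector
  have hT_ent : entOf p T = C.card := by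
    refine entOf_uniform p T C.card ?_ hunif
    rw [Fintype.card_fun, Fintype.card_coe, Fintype.card_bool]
  -- invariance identities
  have e_MF : entOf p (fun ω => (M ω, F ω)) = entOf p T := by
    refine entOf_comp_inj p T _
      (fun v : {x // x ∈ C} → Bool =>
        ((fun i : {x // x ∈ A} => v ⟨i.1, Finset.mem_union_left _ i.2⟩),
         (fun i : {x // x ∈ B} => v ⟨i.1, Finset.mem_union_right _ i.2⟩))) ?_ (fun ω => rfl)
    intro x y hxy
    simp only [Prod.ext_iff] at hxy
    funext k
    rcases Finset.mem_union.mp k.2 with hk | hk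
    · exact congrFun hxy.1 ⟨k.1, hk⟩
    · exact congrFun hxy.2 ⟨k.1, hk⟩
  have e_MYF : entOf p (fun ω => (M ω, (Y ω, F ω))) = entOf p (fun ω => (T ω, Y ω)) := by
    refine entOf_comp_inj p (fun ω => (T ω, Y ω)) _
      (fun x : ({x // x ∈ C} → Bool) × γ =>
        ((fun i : {x // x ∈ A} => x.1 ⟨i.1, Finset.mem_union_left _ i.2⟩),
         (x.2, (fun i : {x // x ∈ B} => x.1 ⟨i.1, Finset.mem_union_right _ i.2⟩)))) ?_
      (fun ω => rfl)
    intro x y hxy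
    simp only [Prod.ext_iff] at hxy
    refine Prod.ext ?_ hxy.2.1
    funext k
    rcases Finset.mem_union.mp k.2 with hk | hk
    · exact congrFun hxy.1 ⟨k.1, hk⟩
    · exact congrFun hxy.2.2 ⟨k.1, hk⟩
  -- subadditivity for (Y, F)
  have e_sub : entOf p (fun ω => (Y ω, F ω)) ≤ entOf p Y + entOf p F :=
    entOf_pair_le p hp hp1 Y F
  -- chain rule bound
  have hchain := chain n p hp hp1 S Y C
  -- put everything together
  have hI : condMutInfoOf p M Y F
      = entOf p T - entOf p F - entOf p (fun ω => (T ω, Y ω))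
        + entOf p (fun ω => (Y ω, F ω)) := by
    unfold condMutInfoOf condEntOf
    rw [e_MF, e_MYF]
    ring
  have hcond : condEntOf p T Y = entOf p (fun ω => (T ω, Y ω)) - entOf p Y := rfl
  have hsum : ∑ i ∈ C, (1 - condEntOf p (S i)
      (fun ω => (Y ω, fun j : Fin i.1 => S (Fin.castLE i.2.le j) ω)))
      = (C.card : ℝ) - ∑ i ∈ C, condEntOf p (S i)
        (fun ω => (Y ω, fun j : Fin i.1 => S (Fin.castLE i.2.le j) ω)) := by
    rw [Finset.sum_sub_distrib, Finset.sum_const, nsmul_eq_mul, mul_one]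
  rw [hI, hsum]
  have := hchain
  rw [hcond] at this
  linarith [hT_ent, e_sub, this]
end
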